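/- Let a, b be pseudo Drazin invertible elements of a Banach algebra A with ab = λ ba, λ ≠ 0. Then a^‡ b = λ^(−1) b a^‡ and a b^‡ = λ^(−1) b^‡ a. -/

import Mathlib

/-- Membership in the Jacobson radical of a ring. -/
def MemJacobson {A : Type*} [Ring A] (x : A) : Prop := ∀ y : A, IsUnit (1 - y * x)

/-- `b` is a pseudo Drazin inverse of `a`. -/
def IsPDrazinInv {A : Type*} [Ring A] (a b : A) : Prop :=
  a * b = b * a ∧ b * a * b = b ∧ ∃ k : ℕ, 1 ≤ k ∧ MemJacobson (a ^ k - a ^ (k + 1) * b)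

open Filter Topology

lemma spec_zero {A : Type*} [NormedRing A] [NormedAlgebra ℂ A] [CompleteSpace A]
    (n : A) (k : ℕ) (hJ : MemJacobson (n ^ k)) : spectralRadius ℂ n = 0 := by
  have hsub : spectrum ℂ n ⊆ {0} := by
    intro z hz
    by_contra hz0
    have hz0 : z ≠ 0 := hz0
    have hmem : z ^ k ∈ spectrum ℂ (n ^ k) :=
      spectrum.pow_image_subset n k ⟨z, hz, rfl⟩
    rw [spectrum.mem_iff] at hmem
    exact hmem (by
      have h1 : IsUnit (1 - algebraMap ℂ A ((z ^ k)⁻¹) * n ^ k) := hJ _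
      have h2 : IsUnit (algebraMap ℂ A (z ^ k)) :=
        (IsUnit.map (algebraMap ℂ A) (Ne.isUnit (pow_ne_zero k hz0)))
      have h3 := h2.mul h1
      have heq : algebraMap ℂ A (z ^ k) * (1 - algebraMap ℂ A ((z ^ k)⁻¹) * n ^ k)
          = algebraMap ℂ A (z ^ k) - n ^ k := by
        rw [mul_sub, mul_one, ← mul_assoc, ← map_mul,
          mul_inv_cancel₀ (pow_ne_zero k hz0), map_one, one_mul]
      rwa [heq] at h3)
  refine le_antisymm ?_ zero_le
  refine iSup₂_le fun z hz => ?_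
  rcases hsub hz with rfl
  simp

lemma vanish {A : Type*} [NormedRing A] [NormedAlgebra ℂ A] [CompleteSpace A]
    (n x : A) (hs : spectralRadius ℂ n = 0) (C : ℝ) (hC : 0 ≤ C)
    (hx : ∀ m : ℕ, 1 ≤ m → ‖x‖ ≤ ‖n ^ m‖ * C ^ m * ‖x‖) : x = 0 := by
  by_contra hx0
  have hxpos : 0 < ‖x‖ := norm_pos_iff.mpr hx0
  set C' : ℝ := max C 1 with hC'def
  have hC1 : 1 ≤ C' := le_max_right _ _
  have hC'pos : 0 < C' := lt_of_lt_of_le one_pos hC1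
  have hbound : ∀ m : ℕ, 1 ≤ m → 1 ≤ ‖n ^ m‖ * C' ^ m := by
    intro m hm
    have h1 := hx m hm
    have h2 : ‖n ^ m‖ * C ^ m ≤ ‖n ^ m‖ * C' ^ m :=
      mul_le_mul_of_nonneg_left (pow_le_pow_left₀ hC (le_max_left _ _) m) (norm_nonneg _)
    nlinarith [norm_nonneg (n ^ m)]
  have hgel := spectrum.pow_norm_pow_one_div_tendsto_nhds_spectralRadius n
  rw [hs] at hgel
  have hreal : Tendsto (fun m : ℕ => ‖n ^ m‖ ^ ((m : ℝ))⁻¹) atTop (𝓝 0) := by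
    have h4 := (ENNReal.tendsto_toReal (by simp)).comp hgel
    simpa [Function.comp_def, one_div,
      ENNReal.toReal_ofReal (Real.rpow_nonneg (norm_nonneg _) _)] using h4
  have hpos2 : (0:ℝ) < (2 * C')⁻¹ := by positivity
  have hev : ∀ᶠ m : ℕ in atTop, ‖n ^ m‖ ^ ((m : ℝ))⁻¹ < (2 * C')⁻¹ :=
    hreal.eventually (eventually_lt_nhds hpos2)
  obtain ⟨m, hm1, hm2⟩ := (hev.and (eventually_ge_atTop 1)).exists
  have hm0 : m ≠ 0 := by omega
  have h0 : (0:ℝ) ≤ ‖n ^ m‖ ^ ((m : ℝ))⁻¹ := Real.rpow_nonneg (norm_nonneg _) _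
  have hpow : ‖n ^ m‖ < ((2 * C')⁻¹) ^ m := by
    have h5 := pow_lt_pow_left₀ hm1 h0 hm0
    rwa [← Real.rpow_natCast (‖n ^ m‖ ^ ((m : ℝ))⁻¹) m, ← Real.rpow_mul (norm_nonneg _),
      inv_mul_cancel₀ (by exact_mod_cast hm0), Real.rpow_one] at h5
  have e1 : ‖n ^ m‖ * C' ^ m < ((2 * C')⁻¹) ^ m * C' ^ m :=
    mul_lt_mul_of_pos_right hpow (pow_pos hC'pos m)
  have e2 : ((2 * C')⁻¹) ^ m * C' ^ m = ((2:ℝ)⁻¹) ^ m := by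
    rw [← mul_pow]; congr 1; field_simp
  have e3 : ((2:ℝ)⁻¹) ^ m < 1 := pow_lt_one₀ (by norm_num) (by norm_num) hm0
  have := hbound m hm2
  linarith [e1, e2 ▸ e1]

lemma key {A : Type*} [NormedRing A] [NormedAlgebra ℂ A] [CompleteSpace A]
    (a ad b : A) (hc : a * ad = ad * a) (hinv : ad * a * ad = ad)
    (k : ℕ) (hk : 1 ≤ k) (hJ : MemJacobson (a ^ k - a ^ (k + 1) * ad))
    (lam : ℂ) (hlam : lam ≠ 0) (h : a * b = lam • (b * a)) :
    ad * b = lam⁻¹ • (b * ad) := by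
  obtain ⟨p, hpdef⟩ : ∃ p : A, p = a * ad := ⟨_, rfl⟩
  have hpp : IsIdempotentElem p := by
    show p * p = p
    rw [hpdef, mul_assoc a ad (a * ad), ← mul_assoc ad a ad, hinv]
  have hcap : Commute p a := by
    show p * a = a * p
    rw [hpdef, mul_assoc, ← hc, ← mul_assoc]
  have hpad : p * ad = ad := by rw [hpdef, hc, hinv]
  have hadp : ad * p = ad := by rw [hpdef, ← mul_assoc, hinv]
  have hba : b * a = lam⁻¹ • (a * b) := by
    rw [h, smul_smul, inv_mul_cancel₀ hlam, one_smul]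
  obtain ⟨q, hqdef⟩ : ∃ q : A, q = 1 - p := ⟨_, rfl⟩
  have hqq : IsIdempotentElem q := hqdef ▸ hpp.one_sub
  have haq : Commute a q := hqdef ▸ (Commute.one_right a).sub_right hcap.symm
  obtain ⟨n, hndef⟩ : ∃ n : A, n = a * q := ⟨_, rfl⟩
  have hnm : ∀ m : ℕ, 1 ≤ m → n ^ m = a ^ m * q := by
    intro m hm
    obtain ⟨m', rfl⟩ := Nat.exists_eq_succ_of_ne_zero (by omega : m ≠ 0)
    rw [hndef, haq.mul_pow, hqq.pow_succ_eq]
  have hnk : MemJacobson (n ^ k) := by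
    have : n ^ k = a ^ k - a ^ (k + 1) * ad := by
      rw [hnm k hk, hqdef, mul_sub, mul_one, hpdef, ← mul_assoc, ← pow_succ]
    rwa [this]
  have hrad : spectralRadius ℂ n = 0 := spec_zero n k hnk
  -- commutation of p with b
  have key_vanish : ∀ x : A, p * x = 0 → x * a = lam⁻¹ • (a * x) → x * p = x → x = 0 := by
    intro x hpx hxa hxp
    have hiter : ∀ m : ℕ, x = (lam⁻¹) ^ m • (a ^ m * x * ad ^ m) := by
      intro m
      induction m with
      | zero => simp
      | succ m ih =>
        have hstep : x = lam⁻¹ • (a * x * ad) := by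
          calc x = x * p := hxp.symm
            _ = x * a * ad := by rw [hpdef, mul_assoc]
            _ = (lam⁻¹ • (a * x)) * ad := by rw [hxa]
            _ = lam⁻¹ • (a * x * ad) := by rw [smul_mul_assoc]
        calc x = (lam⁻¹) ^ m • (a ^ m * x * ad ^ m) := ih
          _ = (lam⁻¹) ^ m • (a ^ m * (lam⁻¹ • (a * x * ad)) * ad ^ m) := by rw [← hstep]
          _ = (lam⁻¹) ^ (m + 1) • (a ^ (m + 1) * x * ad ^ (m + 1)) := by
              rw [mul_smul_comm, smul_mul_assoc, smul_smul, ← pow_succ]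
              congr 1
              rw [pow_succ a m, pow_succ' ad m]
              noncomm_ring
    refine vanish n x hrad (‖lam⁻¹‖ * ‖ad‖) (by positivity) ?_
    intro m hm
    have hax : a ^ m * x = n ^ m * x := by
      have e : a ^ m * (1 - p) * x = a ^ m * x - a ^ m * (p * x) := by noncomm_ring
      rw [hnm m hm, hqdef, e, hpx, mul_zero, sub_zero]
    have hx1 : x = (lam⁻¹) ^ m • (n ^ m * x * ad ^ m) := by
      rw [← hax]; exact hiter m
    calc ‖x‖ = ‖(lam⁻¹) ^ m • (n ^ m * x * ad ^ m)‖ := by rw [← hx1]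
      _ = ‖lam⁻¹‖ ^ m * ‖n ^ m * x * ad ^ m‖ := by rw [norm_smul, norm_pow]
      _ ≤ ‖lam⁻¹‖ ^ m * (‖n ^ m‖ * ‖x‖ * ‖ad‖ ^ m) := by
          refine mul_le_mul_of_nonneg_left ?_ (by positivity)
          calc ‖n ^ m * x * ad ^ m‖ ≤ ‖n ^ m * x‖ * ‖ad ^ m‖ := norm_mul_le _ _
            _ ≤ (‖n ^ m‖ * ‖x‖) * ‖ad‖ ^ m := by
                have t2 := norm_mul_le (n ^ m) x
                have t3 := norm_pow_le' ad (by omega : 0 < m)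
                exact mul_le_mul t2 t3 (norm_nonneg _) (by positivity)
      _ = ‖n ^ m‖ * (‖lam⁻¹‖ * ‖ad‖) ^ m * ‖x‖ := by rw [mul_pow]; ring
  have key_vanish' : ∀ y : A, y * p = 0 → y * a = lam⁻¹ • (a * y) → p * y = y → y = 0 := by
    intro y hyp hya hpy
    have hay : a * y = lam • (y * a) := by
      rw [hya, smul_smul, mul_inv_cancel₀ hlam, one_smul]
    have hiter : ∀ m : ℕ, y = lam ^ m • (ad ^ m * y * a ^ m) := by
      intro m
      induction m with
      | zero => simp
      | succ m ih =>
        have hstep : y = lam • (ad * y * a) := by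
          calc y = p * y := hpy.symm
            _ = ad * (a * y) := by rw [hpdef, hc, mul_assoc]
            _ = ad * (lam • (y * a)) := by rw [hay]
            _ = lam • (ad * y * a) := by rw [mul_smul_comm, mul_assoc]
        calc y = lam ^ m • (ad ^ m * y * a ^ m) := ih
          _ = lam ^ m • (ad ^ m * (lam • (ad * y * a)) * a ^ m) := by rw [← hstep]
          _ = lam ^ (m + 1) • (ad ^ (m + 1) * y * a ^ (m + 1)) := by
              rw [mul_smul_comm, smul_mul_assoc, smul_smul, ← pow_succ]
              congr 1
              rw [pow_succ ad m, pow_succ' a m]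
              noncomm_ring
    refine vanish n y hrad (‖lam‖ * ‖ad‖) (by positivity) ?_
    intro m hm
    have hya2 : y * a ^ m = y * n ^ m := by
      have e : y * (a ^ m * (1 - p)) = y * a ^ m - y * (a ^ m * p) := by noncomm_ring
      rw [hnm m hm, hqdef, e, ← (hcap.pow_right m).eq, ← mul_assoc, hyp, zero_mul, sub_zero]
    have hy1 : y = lam ^ m • (ad ^ m * (y * n ^ m)) := by
      rw [← hya2, ← mul_assoc]; exact hiter m
    calc ‖y‖ = ‖lam ^ m • (ad ^ m * (y * n ^ m))‖ := by rw [← hy1]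
      _ = ‖lam‖ ^ m * ‖ad ^ m * (y * n ^ m)‖ := by rw [norm_smul, norm_pow]
      _ ≤ ‖lam‖ ^ m * (‖ad‖ ^ m * (‖y‖ * ‖n ^ m‖)) := by
          refine mul_le_mul_of_nonneg_left ?_ (by positivity)
          calc ‖ad ^ m * (y * n ^ m)‖ ≤ ‖ad ^ m‖ * ‖y * n ^ m‖ := norm_mul_le _ _
            _ ≤ ‖ad‖ ^ m * (‖y‖ * ‖n ^ m‖) := by
                have t2 := norm_mul_le y (n ^ m)
                have t3 := norm_pow_le' ad (by omega : 0 < m)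
                exact mul_le_mul t3 t2 (norm_nonneg _) (by positivity)
      _ = ‖n ^ m‖ * (‖lam‖ * ‖ad‖) ^ m * ‖y‖ := by rw [mul_pow]; ring
  have epc : ∀ c : A, c * a = lam⁻¹ • (a * c) → (p * c) * a = lam⁻¹ • (a * (p * c)) := by
    intro c hcl
    calc (p * c) * a = p * (c * a) := by rw [mul_assoc]
      _ = p * (lam⁻¹ • (a * c)) := by rw [hcl]
      _ = lam⁻¹ • (p * (a * c)) := mul_smul_comm _ _ _
      _ = lam⁻¹ • (a * (p * c)) := by rw [← mul_assoc, hcap.eq, mul_assoc]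
  have ebp : (b * p) * a = lam⁻¹ • (a * (b * p)) := by
    calc (b * p) * a = b * a * p := by rw [mul_assoc, hcap.eq, ← mul_assoc]
      _ = (lam⁻¹ • (a * b)) * p := by rw [hba]
      _ = lam⁻¹ • (a * (b * p)) := by rw [smul_mul_assoc, mul_assoc]
  have hx1 : b * p - p * (b * p) = 0 := by
    refine key_vanish _ ?_ ?_ ?_
    · have e : p * (b * p - p * (b * p)) = p * (b * p) - p * p * (b * p) := by noncomm_ring
      rw [e, hpp.eq]
      exact sub_self _
    · rw [sub_mul, ebp, epc (b * p) ebp, ← smul_sub, ← mul_sub]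
    · have e : (b * p - p * (b * p)) * p = b * (p * p) - p * (b * (p * p)) := by noncomm_ring
      rw [e, hpp.eq]
  have hy1 : p * b - p * (b * p) = 0 := by
    refine key_vanish' _ ?_ ?_ ?_
    · have e : (p * b - p * (b * p)) * p = p * (b * p) - p * (b * (p * p)) := by noncomm_ring
      rw [e, hpp.eq]
      exact sub_self _
    · rw [sub_mul, epc b hba, epc (b * p) ebp, ← smul_sub, ← mul_sub]
    · have e : p * (p * b - p * (b * p)) = (p * p) * b - (p * p) * (b * p) := by noncomm_ring
      rw [e, hpp.eq]
  have hbp : p * b = b * p := by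
    have h1 : b * p = p * (b * p) := by rwa [sub_eq_zero] at hx1
    have h2 : p * b = p * (b * p) := by rwa [sub_eq_zero] at hy1
    rw [h1, h2]
  have t1 : a * (ad * b) = p * b := by rw [← mul_assoc, ← hpdef]
  have t2 : a * (lam⁻¹ • (b * ad)) = b * p := by
    rw [mul_smul_comm, ← mul_assoc, h, smul_mul_assoc, smul_smul, inv_mul_cancel₀ hlam,
      one_smul, mul_assoc, ← hpdef]
  have haz : a * (ad * b - lam⁻¹ • (b * ad)) = 0 := by
    rw [mul_sub, t1, t2, hbp]
    exact sub_self _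
  have hpz : p * (ad * b - lam⁻¹ • (b * ad)) = ad * b - lam⁻¹ • (b * ad) := by
    rw [mul_sub, ← mul_assoc, hpad, mul_smul_comm, ← mul_assoc, hbp, mul_assoc, hpad]
  have hz : ad * b - lam⁻¹ • (b * ad) = 0 := by
    calc ad * b - lam⁻¹ • (b * ad) = p * (ad * b - lam⁻¹ • (b * ad)) := hpz.symm
      _ = ad * (a * (ad * b - lam⁻¹ • (b * ad))) := by rw [hpdef, hc, mul_assoc]
      _ = 0 := by rw [haz, mul_zero]
  rwa [sub_eq_zero] at hz

theorem stmt13 {A : Type*} [NormedRing A] [NormedAlgebra ℂ A] [CompleteSpace A]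
    (a ad b bd : A) (ha : IsPDrazinInv a ad) (hb : IsPDrazinInv b bd)
    (lam : ℂ) (hlam : lam ≠ 0) (h : a * b = lam • (b * a)) :
    ad * b = lam⁻¹ • (b * ad) ∧ a * bd = lam⁻¹ • (bd * a) := by
  obtain ⟨hc, hinv, k, hk, hJ⟩ := ha
  obtain ⟨hc', hinv', k', hk', hJ'⟩ := hb
  constructor
  · exact key a ad b hc hinv k hk hJ lam hlam h
  · have h2 : b * a = lam⁻¹ • (a * b) := by
      rw [h, smul_smul, inv_mul_cancel₀ hlam, one_smul]
    have h3 := key b bd a hc' hinv' k' hk' hJ' lam⁻¹ (inv_ne_zero hlam) h2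
    rw [inv_inv] at h3
    rw [h3, smul_smul, inv_mul_cancel₀ hlam, one_smul]
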